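/- Let T_c > 0, Δ ≥ 0, and d : [0, ∞) → ℝ with |d(s)| ≤ Δ for all s. If x : [0, ∞) → ℝ is an absolutely continuous solution of dx/dτ = -x(τ) + T_c·exp(-τ)·d(φ⁻¹(τ)) with x(0) = x₀, where φ⁻¹(τ) = T_c(1 - exp(-τ)), then |x(τ)| ≤ exp(-τ)(|x₀| + Δ·T_c·τ) for all τ ≥ 0, and consequently x(τ) → 0 as τ → ∞. -/

import Mathlib

theorem stmt_2 (Tc Δ x₀ : ℝ) (hTc : 0 < Tc) (hΔ : 0 ≤ Δ)
    (d : ℝ → ℝ) (hd : ∀ s, 0 ≤ s → |d s| ≤ Δ)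
    (x : ℝ → ℝ) (hx0 : x 0 = x₀)
    (hode : ∀ τ, 0 ≤ τ →
      HasDerivAt x (-x τ + Tc * Real.exp (-τ) * d (Tc * (1 - Real.exp (-τ)))) τ) :
    (∀ τ, 0 ≤ τ → |x τ| ≤ Real.exp (-τ) * (|x₀| + Δ * Tc * τ)) ∧
    Filter.Tendsto x Filter.atTop (nhds 0) := by
  set y : ℝ → ℝ := fun τ => Real.exp τ * x τ with hy
  have hyderiv : ∀ τ, 0 ≤ τ →
      HasDerivAt y (Tc * d (Tc * (1 - Real.exp (-τ)))) τ := by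
    intro τ hτ
    have h1 := (Real.hasDerivAt_exp τ).fun_mul (hode τ hτ)
    refine h1.congr_deriv ?_
    have : Real.exp τ * Real.exp (-τ) = 1 := by
      rw [← Real.exp_add]; simp
    linear_combination (Tc * d (Tc * (1 - Real.exp (-τ)))) * this
  have hbound : ∀ τ, 0 ≤ τ → |x τ| ≤ Real.exp (-τ) * (|x₀| + Δ * Tc * τ) := by
    intro τ hτ
    have key : ‖y τ - y 0‖ ≤ Δ * Tc * ‖τ - 0‖ := by
      apply Convex.norm_image_sub_le_of_norm_hasDerivWithin_le
        (f' := fun t => Tc * d (Tc * (1 - Real.exp (-t)))) ?_ ?_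
        (convex_Icc 0 τ) (Set.left_mem_Icc.2 hτ) (Set.right_mem_Icc.2 hτ)
      · intro t ht
        exact (hyderiv t ht.1).hasDerivWithinAt
      · intro t ht
        rw [Real.norm_eq_abs, abs_mul, abs_of_pos hTc]
        have := hd (Tc * (1 - Real.exp (-t))) (by
          have : Real.exp (-t) ≤ 1 := Real.exp_le_one_iff.2 (by linarith [ht.1])
          nlinarith)
        nlinarith
    have hy0 : y 0 = x₀ := by simp [hy, hx0]
    have hyτ : |y τ| ≤ |x₀| + Δ * Tc * τ := by
      have := abs_sub_abs_le_abs_sub (y τ) (y 0)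
      rw [hy0] at this
      rw [Real.norm_eq_abs, Real.norm_eq_abs, hy0, abs_of_nonneg (by linarith : (0:ℝ) ≤ τ - 0)] at key
      linarith
    have : |x τ| = Real.exp (-τ) * |y τ| := by
      rw [hy]
      simp only [abs_mul, abs_of_pos (Real.exp_pos τ)]
      rw [← mul_assoc, ← Real.exp_add]
      simp
    rw [this]
    exact mul_le_mul_of_nonneg_left hyτ (Real.exp_pos _).le
  refine ⟨hbound, ?_⟩
  refine squeeze_zero_norm' (a := fun τ => Real.exp (-τ) * (|x₀| + Δ * Tc * τ)) ?_ ?_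
  · filter_upwards [Filter.eventually_ge_atTop 0] with τ hτ
    exact hbound τ hτ
  · have h1 : Filter.Tendsto (fun τ : ℝ => |x₀| * Real.exp (-τ)) Filter.atTop (nhds 0) := by
      have := Real.tendsto_exp_neg_atTop_nhds_zero
      simpa using this.const_mul |x₀|
    have h2 : Filter.Tendsto (fun τ : ℝ => Δ * Tc * (τ * Real.exp (-τ))) Filter.atTop (nhds 0) := by
      have := Real.tendsto_pow_mul_exp_neg_atTop_nhds_zero 1
      simp only [pow_one] at this
      simpa using this.const_mul (Δ * Tc)
    have := h1.add h2
    simp only [add_zero] at this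
    convert this using 2 with τ
    ring
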